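/- The uncorrelated-input statistical strength S_uc is a Bell nonlocality monotone: for every no-signaling behavior P in the (r,s) Bell scenario and every LOSR wiring W from the (r,s) scenario to the (r_f,s_f) scenario, S_uc(W(P)) ≤ S_uc(P); moreover S_uc(Q) = 0 for every local behavior Q. -/

import Mathlib

open scoped ENNReal
open Finset

/-- A probability distribution on a finite type. -/
def IsDist {Z : Type*} [Fintype Z] (p : Z → ℝ) : Prop :=
  (∀ z, 0 ≤ p z) ∧ ∑ z, p z = 1

/-- Relative entropy (Kullback-Leibler divergence) of finitely supported
distributions, valued in `[0,∞]`, with the conventions `0·log(0/t) = 0` and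
`S(p‖q) = ∞` whenever `q` vanishes at a point where `p` does not. -/
noncomputable def relEnt {Z : Type*} [Fintype Z] (p q : Z → ℝ) : ℝ≥0∞ :=
  if ∃ z, p z ≠ 0 ∧ q z = 0 then ⊤
  else ENNReal.ofReal (∑ z, p z * Real.log (p z / q z))

/-- A behavior in the (r,s) Bell scenario: `P a b x y = P(a,b|x,y)`. -/
def IsBehavior {r s : ℕ} (P : Fin r → Fin r → Fin s → Fin s → ℝ) : Prop :=
  (∀ a b x y, 0 ≤ P a b x y) ∧ ∀ x y, ∑ a, ∑ b, P a b x y = 1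

/-- The no-signaling conditions. -/
def NoSignaling {r s : ℕ} (P : Fin r → Fin r → Fin s → Fin s → ℝ) : Prop :=
  (∀ b x x' y, ∑ a, P a b x y = ∑ a, P a b x' y) ∧
  (∀ a x y y', ∑ b, P a b x y = ∑ b, P a b x y')

/-- Local (local-hidden-variable) behavior. -/
def IsLocal {r s : ℕ} (P : Fin r → Fin r → Fin s → Fin s → ℝ) : Prop :=
  ∃ (n : ℕ) (q : Fin n → ℝ) (PA : Fin r → Fin s → Fin n → ℝ)
    (PB : Fin r → Fin s → Fin n → ℝ),
    IsDist q ∧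
    (∀ x l, (∀ a, 0 ≤ PA a x l) ∧ ∑ a, PA a x l = 1) ∧
    (∀ y l, (∀ b, 0 ≤ PB b y l) ∧ ∑ b, PB b y l = 1) ∧
    (∀ a b x y, P a b x y = ∑ l, q l * PA a x l * PB b y l)

/-- Output distribution `P(·,·|x,y)` of a behavior for fixed inputs. -/
def outDist {r s : ℕ} (P : Fin r → Fin r → Fin s → Fin s → ℝ) (x y : Fin s) :
    Fin r × Fin r → ℝ := fun ab => P ab.1 ab.2 x y

/-- The behavior relative entropy `S_b(P‖P')`: the maximum over input pairs
`(x,y)` of the relative entropy of the output distributions. -/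
noncomputable def Sb {r s : ℕ} (P P' : Fin r → Fin r → Fin s → Fin s → ℝ) : ℝ≥0∞ :=
  Finset.univ.sup fun xy : Fin s × Fin s =>
    relEnt (outDist P xy.1 xy.2) (outDist P' xy.1 xy.2)

/-- A global wiring from the (r,s) scenario to the (rf,sf) scenario. -/
structure GlobalWiring (r s rf sf : ℕ) where
  I : Fin s → Fin s → Fin sf → Fin sf → ℝ          -- I x y χ ψ  =  I(x,y|χ,ψ)
  O : Fin rf → Fin rf → Fin r → Fin r → Fin s → Fin s → Fin sf → Fin sf → ℝ
    -- O α β a b x y χ ψ  =  O(α,β|a,b,x,y,χ,ψ)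
  I_nonneg : ∀ x y χ ψ, 0 ≤ I x y χ ψ
  I_sum : ∀ χ ψ, ∑ x, ∑ y, I x y χ ψ = 1
  O_nonneg : ∀ α β a b x y χ ψ, 0 ≤ O α β a b x y χ ψ
  O_sum : ∀ a b x y χ ψ, ∑ α, ∑ β, O α β a b x y χ ψ = 1

/-- Action of a global wiring on a behavior. -/
noncomputable def GlobalWiring.apply {r s rf sf : ℕ} (W : GlobalWiring r s rf sf)
    (P : Fin r → Fin r → Fin s → Fin s → ℝ) :
    Fin rf → Fin rf → Fin sf → Fin sf → ℝ :=
  fun α β χ ψ => ∑ a, ∑ b, ∑ x, ∑ y,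
    W.O α β a b x y χ ψ * P a b x y * W.I x y χ ψ

/-- LOSR wiring: a global wiring whose input and output boxes are local. -/
def GlobalWiring.IsLOSR {r s rf sf : ℕ} (W : GlobalWiring r s rf sf) : Prop :=
  ∃ (n m : ℕ) (q : Fin n → ℝ) (q' : Fin m → ℝ)
    (IA : Fin s → Fin sf → Fin n → ℝ) (IB : Fin s → Fin sf → Fin n → ℝ)
    (OA : Fin rf → Fin r → Fin s → Fin sf → Fin m → ℝ)
    (OB : Fin rf → Fin r → Fin s → Fin sf → Fin m → ℝ),
    IsDist q ∧ IsDist q' ∧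
    (∀ χ l, (∀ x, 0 ≤ IA x χ l) ∧ ∑ x, IA x χ l = 1) ∧
    (∀ ψ l, (∀ y, 0 ≤ IB y ψ l) ∧ ∑ y, IB y ψ l = 1) ∧
    (∀ a x χ u, (∀ α, 0 ≤ OA α a x χ u) ∧ ∑ α, OA α a x χ u = 1) ∧
    (∀ b y ψ u, (∀ β, 0 ≤ OB β b y ψ u) ∧ ∑ β, OB β b y ψ u = 1) ∧
    (∀ x y χ ψ, W.I x y χ ψ = ∑ l, q l * IA x χ l * IB y ψ l) ∧
    (∀ α β a b x y χ ψ,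
      W.O α β a b x y χ ψ = ∑ u, q' u * OA α a x χ u * OB β b y ψ u)

/-- UCLOSR wiring: a global wiring whose input and output boxes are products. -/
def GlobalWiring.IsUCLOSR {r s rf sf : ℕ} (W : GlobalWiring r s rf sf) : Prop :=
  ∃ (IA : Fin s → Fin sf → ℝ) (IB : Fin s → Fin sf → ℝ)
    (OA : Fin rf → Fin r → Fin s → Fin sf → ℝ)
    (OB : Fin rf → Fin r → Fin s → Fin sf → ℝ),
    (∀ χ, (∀ x, 0 ≤ IA x χ) ∧ ∑ x, IA x χ = 1) ∧
    (∀ ψ, (∀ y, 0 ≤ IB y ψ) ∧ ∑ y, IB y ψ = 1) ∧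
    (∀ a x χ, (∀ α, 0 ≤ OA α a x χ) ∧ ∑ α, OA α a x χ = 1) ∧
    (∀ b y ψ, (∀ β, 0 ≤ OB β b y ψ) ∧ ∑ β, OB β b y ψ = 1) ∧
    (∀ x y χ ψ, W.I x y χ ψ = IA x χ * IB y ψ) ∧
    (∀ α β a b x y χ ψ, W.O α β a b x y χ ψ = OA α a x χ * OB β b y ψ)

/-- The relative entropy of nonlocality `S_nl`. -/
noncomputable def Snl {r s : ℕ} (P : Fin r → Fin r → Fin s → Fin s → ℝ) : ℝ≥0∞ :=
  ⨅ (Q : Fin r → Fin r → Fin s → Fin s → ℝ) (_ : IsBehavior Q ∧ IsLocal Q), Sb P Q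

/-- The uniform-input statistical strength `S_u`. -/
noncomputable def Su {r s : ℕ} (P : Fin r → Fin r → Fin s → Fin s → ℝ) : ℝ≥0∞ :=
  ⨅ (Q : Fin r → Fin r → Fin s → Fin s → ℝ) (_ : IsBehavior Q ∧ IsLocal Q),
    ((s : ℝ≥0∞) ^ 2)⁻¹ * ∑ x, ∑ y, relEnt (outDist P x y) (outDist Q x y)

/-- The uncorrelated-input statistical strength `S_uc`. -/
noncomputable def Suc {r s : ℕ} (P : Fin r → Fin r → Fin s → Fin s → ℝ) : ℝ≥0∞ :=
  ⨆ (DA : Fin s → ℝ) (DB : Fin s → ℝ) (_ : IsDist DA ∧ IsDist DB),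
    ⨅ (Q : Fin r → Fin r → Fin s → Fin s → ℝ) (_ : IsBehavior Q ∧ IsLocal Q),
      ∑ x, ∑ y, ENNReal.ofReal (DA x * DB y) *
        relEnt (outDist P x y) (outDist Q x y)


section Aux

theorem log_sum_ineq {ι : Type*} [Fintype ι] (a b : ι → ℝ)
    (ha : ∀ i, 0 ≤ a i) (hb : ∀ i, 0 ≤ b i) (hab : ∀ i, b i = 0 → a i = 0) :
    (∑ i, a i) * Real.log ((∑ i, a i) / (∑ i, b i)) ≤
      ∑ i, a i * Real.log (a i / b i) := by
  set A := ∑ i, a i with hA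
  set B := ∑ i, b i with hB
  rcases eq_or_lt_of_le (Finset.sum_nonneg (fun i (_ : i ∈ univ) => hb i)) with hB0 | hB0
  · have hb0 : ∀ i, b i = 0 := fun i =>
      (Finset.sum_eq_zero_iff_of_nonneg (fun i _ => hb i)).mp hB0.symm i (mem_univ i)
    have ha0 : ∀ i, a i = 0 := fun i => hab i (hb0 i)
    have : A = 0 := by rw [hA]; exact Finset.sum_eq_zero (fun i _ => ha0 i)
    rw [this, zero_mul]
    refine Finset.sum_nonneg fun i _ => ?_
    rw [ha0 i, zero_mul]
  rcases eq_or_lt_of_le (Finset.sum_nonneg (fun i (_ : i ∈ univ) => ha i)) with hA0 | hA0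
  · have ha0 : ∀ i, a i = 0 := fun i =>
      (Finset.sum_eq_zero_iff_of_nonneg (fun i _ => ha i)).mp hA0.symm i (mem_univ i)
    have : A = 0 := by rw [hA]; exact Finset.sum_eq_zero (fun i _ => ha0 i)
    rw [this, zero_mul]
    refine Finset.sum_nonneg fun i _ => ?_
    rw [ha0 i, zero_mul]
  rw [← hA] at hA0; rw [← hB] at hB0
  have key : ∀ i, a i * Real.log (A / B) + (a i - b i * (A / B)) ≤
      a i * Real.log (a i / b i) := by
    intro i
    rcases eq_or_lt_of_le (ha i) with hai | hai
    · rw [← hai]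
      have h1 : 0 ≤ b i * (A / B) := mul_nonneg (hb i) (le_of_lt (div_pos hA0 hB0))
      simp only [zero_mul, zero_add, zero_sub]
      linarith
    · have hbi : 0 < b i := by
        rcases eq_or_lt_of_le (hb i) with h | h
        · exact absurd (hab i h.symm) (ne_of_gt hai)
        · exact h
      have ht : 0 < b i * A / (a i * B) := by positivity
      have hlog : Real.log (b i * A / (a i * B)) ≤ b i * A / (a i * B) - 1 :=
        Real.log_le_sub_one_of_pos ht
      have hsplit : Real.log (a i / b i) - Real.log (A / B)
          = - Real.log (b i * A / (a i * B)) := by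
        rw [Real.log_div (ne_of_gt hai) (ne_of_gt hbi),
          Real.log_div (ne_of_gt hA0) (ne_of_gt hB0),
          Real.log_div (by positivity) (by positivity),
          Real.log_mul (ne_of_gt hbi) (ne_of_gt hA0),
          Real.log_mul (ne_of_gt hai) (ne_of_gt hB0)]
        ring
      have h2 : 1 - b i * A / (a i * B) ≤ Real.log (a i / b i) - Real.log (A / B) := by
        rw [hsplit]; linarith
      have h3 : a i * (1 - b i * A / (a i * B)) ≤
          a i * (Real.log (a i / b i) - Real.log (A / B)) :=
        mul_le_mul_of_nonneg_left h2 (le_of_lt hai)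
      have h4 : a i * (1 - b i * A / (a i * B)) = a i - b i * (A / B) := by
        field_simp
      nlinarith [h3, h4]
  have hsum := Finset.sum_le_sum (fun i (_ : i ∈ univ) => key i)
  have hL : ∑ i, (a i * Real.log (A / B) + (a i - b i * (A / B)))
      = A * Real.log (A / B) + (A - B * (A/B)) := by
    rw [Finset.sum_add_distrib, ← Finset.sum_mul, Finset.sum_sub_distrib,
      ← Finset.sum_mul, ← hA, ← hB]
  have hBB : B * (A / B) = A := by field_simp
  rw [hL, hBB] at hsum
  linarith


theorem relEnt_self {Z : Type*} [Fintype Z] (p : Z → ℝ) : relEnt p p = 0 := by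
  unfold relEnt
  rw [if_neg (by push_neg; exact fun z h => h)]
  have : ∀ z : Z, p z * Real.log (p z / p z) = 0 := by
    intro z
    by_cases h : p z = 0
    · rw [h, zero_mul]
    · rw [div_self h, Real.log_one, mul_zero]
  rw [Finset.sum_eq_zero (fun z _ => this z), ENNReal.ofReal_zero]

theorem ofReal_sum_le {ι : Type*} (s : Finset ι) (f : ι → ℝ) :
    ENNReal.ofReal (∑ i ∈ s, f i) ≤ ∑ i ∈ s, ENNReal.ofReal (f i) := by
  induction s using Finset.cons_induction with
  | empty => simp
  | cons i s hi ih =>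
    rw [Finset.sum_cons, Finset.sum_cons]
    exact le_trans (ENNReal.ofReal_add_le) (add_le_add le_rfl ih)

theorem ofReal_sum_le' {Z : Type*} [Fintype Z] (p q : Z → ℝ) :
    ENNReal.ofReal (∑ z, p z * Real.log (p z / q z)) ≤ relEnt p q := by
  unfold relEnt
  split
  · exact le_top
  · exact le_rfl


/-- Data processing inequality for `relEnt` under a stochastic map. -/
theorem relEnt_map_le {Z Wt : Type*} [Fintype Z] [Fintype Wt]
    (T : Z → Wt → ℝ) (hT0 : ∀ z w, 0 ≤ T z w) (hT1 : ∀ z, ∑ w, T z w = 1)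
    (p q : Z → ℝ) (hp : ∀ z, 0 ≤ p z) (hq : ∀ z, 0 ≤ q z) :
    relEnt (fun w => ∑ z, p z * T z w) (fun w => ∑ z, q z * T z w) ≤
      relEnt p q := by
  unfold relEnt
  by_cases habs : ∃ z, p z ≠ 0 ∧ q z = 0
  · rw [if_pos habs]; exact le_top
  have habs2 : ∀ z, q z = 0 → p z = 0 := by
    intro z hz
    by_contra hpz
    exact habs ⟨z, hpz, hz⟩
  -- absolute continuity of the images
  have habs' : ¬ ∃ w, (∑ z, p z * T z w) ≠ 0 ∧ (∑ z, q z * T z w) = 0 := by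
    rintro ⟨w, hpw, hqw⟩
    apply hpw
    have hq0 : ∀ z ∈ Finset.univ, q z * T z w = 0 :=
      (Finset.sum_eq_zero_iff_of_nonneg
        (fun z _ => mul_nonneg (hq z) (hT0 z w))).mp hqw
    refine Finset.sum_eq_zero fun z _ => ?_
    rcases mul_eq_zero.mp (hq0 z (mem_univ z)) with h | h
    · rw [habs2 z h, zero_mul]
    · rw [h, mul_zero]
  rw [if_neg habs, if_neg habs']
  apply ENNReal.ofReal_le_ofReal
  -- real inequality
  have step1 : ∀ w, (∑ z, p z * T z w) * Real.log ((∑ z, p z * T z w) / (∑ z, q z * T z w))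
      ≤ ∑ z, (p z * T z w) * Real.log ((p z * T z w) / (q z * T z w)) := by
    intro w
    apply log_sum_ineq
    · exact fun z => mul_nonneg (hp z) (hT0 z w)
    · exact fun z => mul_nonneg (hq z) (hT0 z w)
    · intro z h
      rcases mul_eq_zero.mp h with h | h
      · rw [habs2 z h, zero_mul]
      · rw [h, mul_zero]
  have step2 : ∀ w z, (p z * T z w) * Real.log ((p z * T z w) / (q z * T z w))
      = (p z * Real.log (p z / q z)) * T z w := by
    intro w z
    rcases eq_or_lt_of_le (hT0 z w) with h | h
    · rw [← h, mul_zero, zero_mul, mul_zero]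
    · rw [mul_comm (p z), mul_comm (q z), mul_div_mul_left _ _ (ne_of_gt h)]
      ring
  calc ∑ w, (∑ z, p z * T z w) * Real.log ((∑ z, p z * T z w) / (∑ z, q z * T z w))
      ≤ ∑ w, ∑ z, (p z * T z w) * Real.log ((p z * T z w) / (q z * T z w)) :=
        Finset.sum_le_sum fun w _ => step1 w
    _ = ∑ z, ∑ w, (p z * Real.log (p z / q z)) * T z w := by
        rw [Finset.sum_comm]
        exact Finset.sum_congr rfl fun z _ => Finset.sum_congr rfl fun w _ => step2 w z
    _ = ∑ z, p z * Real.log (p z / q z) := by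
        refine Finset.sum_congr rfl fun z _ => ?_
        rw [← Finset.mul_sum, hT1 z, mul_one]


theorem relEnt_top {Z : Type*} [Fintype Z] {p q : Z → ℝ}
    (h : ∃ z, p z ≠ 0 ∧ q z = 0) : relEnt p q = ⊤ := by
  unfold relEnt; rw [if_pos h]

theorem relEnt_of_ac {Z : Type*} [Fintype Z] {p q : Z → ℝ}
    (h : ¬ ∃ z, p z ≠ 0 ∧ q z = 0) :
    relEnt p q = ENNReal.ofReal (∑ z, p z * Real.log (p z / q z)) := by
  unfold relEnt; rw [if_neg h]

theorem relEnt_joint_le {I Z : Type*} [Fintype I] [Fintype Z]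
    (c : I → ℝ) (hc : ∀ i, 0 ≤ c i) (p q : I → Z → ℝ) :
    relEnt (fun iz : I × Z => c iz.1 * p iz.1 iz.2)
        (fun iz : I × Z => c iz.1 * q iz.1 iz.2)
      ≤ ∑ i, ENNReal.ofReal (c i) * relEnt (p i) (q i) := by
  by_cases hcond : ∃ iz : I × Z, c iz.1 * p iz.1 iz.2 ≠ 0 ∧ c iz.1 * q iz.1 iz.2 = 0
  · obtain ⟨⟨i, z⟩, h1, h2⟩ := hcond
    have hci : c i ≠ 0 := fun h => h1 (by simp [h])
    have hpz : p i z ≠ 0 := fun h => h1 (by simp [h])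
    have hqz : q i z = 0 := by
      rcases mul_eq_zero.mp h2 with h | h
      · exact absurd h hci
      · exact h
    have hterm : ENNReal.ofReal (c i) * relEnt (p i) (q i) = ⊤ := by
      rw [relEnt_top ⟨z, hpz, hqz⟩, ENNReal.mul_top]
      simp only [ne_eq, ENNReal.ofReal_eq_zero, not_le]
      exact lt_of_le_of_ne (hc i) (Ne.symm hci)
    have : (⊤ : ℝ≥0∞) ≤ ∑ i, ENNReal.ofReal (c i) * relEnt (p i) (q i) := by
      rw [← hterm]
      exact Finset.single_le_sum (f := fun j => ENNReal.ofReal (c j) * relEnt (p j) (q j)) (fun j _ => zero_le) (mem_univ i)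
    exact le_trans le_top this
  · rw [relEnt_of_ac hcond]
    have hsum : ∑ iz : I × Z, (c iz.1 * p iz.1 iz.2) *
        Real.log ((c iz.1 * p iz.1 iz.2) / (c iz.1 * q iz.1 iz.2))
        = ∑ i, c i * (∑ z, p i z * Real.log (p i z / q i z)) := by
      rw [Fintype.sum_prod_type]
      refine Finset.sum_congr rfl fun i _ => ?_
      rw [Finset.mul_sum]
      refine Finset.sum_congr rfl fun z _ => ?_
      by_cases hci : c i = 0
      · rw [hci]; ring
      · rw [mul_div_mul_left _ _ hci]; ring
    rw [hsum]
    refine le_trans (ofReal_sum_le _ _) (Finset.sum_le_sum fun i _ => ?_)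
    rw [ENNReal.ofReal_mul (hc i)]
    exact mul_le_mul_right (ofReal_sum_le' _ _) _


theorem sum_reorder6 {M : Type*} [AddCommMonoid M]
    {A B C D E G : Type*} [Fintype A] [Fintype B] [Fintype C] [Fintype D]
    [Fintype E] [Fintype G]
    (f : A → B → C → D → E → G → M) :
    ∑ l : A, ∑ u : B, ∑ x : C, ∑ y : D, ∑ a : E, ∑ b : G, f l u x y a b
      = ∑ a : E, ∑ b : G, ∑ x : C, ∑ y : D, ∑ u : B, ∑ l : A, f l u x y a b := by
  have h1 : ∑ l : A, ∑ u : B, ∑ x : C, ∑ y : D, ∑ a : E, ∑ b : G, f l u x y a b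
      = ∑ z : A × B × C × D × E × G, f z.1 z.2.1 z.2.2.1 z.2.2.2.1 z.2.2.2.2.1 z.2.2.2.2.2 := by
    simp [Fintype.sum_prod_type]
  have h2 : ∑ a : E, ∑ b : G, ∑ x : C, ∑ y : D, ∑ u : B, ∑ l : A, f l u x y a b
      = ∑ z : E × G × C × D × B × A, f z.2.2.2.2.2 z.2.2.2.2.1 z.2.2.1 z.2.2.2.1 z.1 z.2.1 := by
    simp [Fintype.sum_prod_type]
  rw [h1, h2]
  exact Fintype.sum_equiv
    ⟨fun z => (z.2.2.2.2.1, z.2.2.2.2.2, z.2.2.1, z.2.2.2.1, z.2.1, z.1),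
     fun z => (z.2.2.2.2.2, z.2.2.2.2.1, z.2.2.1, z.2.2.2.1, z.1, z.2.1),
     by rintro ⟨a, b, c, d, e, g⟩; rfl, by rintro ⟨a, b, c, d, e, g⟩; rfl⟩ _ _
    (by rintro ⟨a, b, c, d, e, g⟩; rfl)


theorem isLocal_of_fintype {r s : ℕ} {P : Fin r → Fin r → Fin s → Fin s → ℝ}
    {Λ : Type*} [Fintype Λ] (q : Λ → ℝ) (PA PB : Fin r → Fin s → Λ → ℝ)
    (hq0 : ∀ l, 0 ≤ q l) (hq1 : ∑ l, q l = 1)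
    (hPA : ∀ x l, (∀ a, 0 ≤ PA a x l) ∧ ∑ a, PA a x l = 1)
    (hPB : ∀ y l, (∀ b, 0 ≤ PB b y l) ∧ ∑ b, PB b y l = 1)
    (hrep : ∀ a b x y, P a b x y = ∑ l, q l * PA a x l * PB b y l) :
    IsLocal P := by
  refine ⟨Fintype.card Λ, fun i => q ((Fintype.equivFin Λ).symm i),
    fun a x i => PA a x ((Fintype.equivFin Λ).symm i),
    fun b y i => PB b y ((Fintype.equivFin Λ).symm i),
    ⟨fun i => hq0 _, ?_⟩, fun x i => hPA x _, fun y i => hPB y _, ?_⟩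
  · rw [Fintype.sum_equiv (Fintype.equivFin Λ).symm _ q (fun i => rfl)]
    exact hq1
  · intro a b x y
    rw [hrep a b x y]
    exact (Fintype.sum_equiv (Fintype.equivFin Λ).symm _ _ (fun i => rfl)).symm


/-- the second reorder instance used for the `ENNReal` rearrangement. -/
theorem sum_reorder6' {M : Type*} [AddCommMonoid M]
    {A B C D E G : Type*} [Fintype A] [Fintype B] [Fintype C] [Fintype D]
    [Fintype E] [Fintype G]
    (f : A → B → C → D → E → G → M) :
    ∑ c : A, ∑ p : B, ∑ l : C, ∑ u : D, ∑ x : E, ∑ y : G, f c p l u x y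
      = ∑ l : C, ∑ x : E, ∑ y : G, ∑ c : A, ∑ p : B, ∑ u : D, f c p l u x y := by
  have h1 : ∑ c : A, ∑ p : B, ∑ l : C, ∑ u : D, ∑ x : E, ∑ y : G, f c p l u x y
      = ∑ z : A × B × C × D × E × G, f z.1 z.2.1 z.2.2.1 z.2.2.2.1 z.2.2.2.2.1 z.2.2.2.2.2 := by
    simp [Fintype.sum_prod_type]
  have h2 : ∑ l : C, ∑ x : E, ∑ y : G, ∑ c : A, ∑ p : B, ∑ u : D, f c p l u x y
      = ∑ z : C × E × G × A × B × D,
          f z.2.2.2.1 z.2.2.2.2.1 z.1 z.2.2.2.2.2 z.2.1 z.2.2.1 := by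
    simp [Fintype.sum_prod_type]
  rw [h1, h2]
  exact Fintype.sum_equiv
    ⟨fun z => (z.2.2.1, z.2.2.2.2.1, z.2.2.2.2.2, z.1, z.2.1, z.2.2.2.1),
     fun z => (z.2.2.2.1, z.2.2.2.2.1, z.1, z.2.2.2.2.2, z.2.1, z.2.2.1),
     by rintro ⟨a, b, c, d, e, g⟩; rfl, by rintro ⟨a, b, c, d, e, g⟩; rfl⟩ _ _
    (by rintro ⟨a, b, c, d, e, g⟩; rfl)

theorem key_lemma {r s rf sf n m : ℕ}
    (P : Fin r → Fin r → Fin s → Fin s → ℝ) (hP : IsBehavior P)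
    (W : GlobalWiring r s rf sf)
    (q : Fin n → ℝ) (q' : Fin m → ℝ)
    (IA : Fin s → Fin sf → Fin n → ℝ) (IB : Fin s → Fin sf → Fin n → ℝ)
    (OA : Fin rf → Fin r → Fin s → Fin sf → Fin m → ℝ)
    (OB : Fin rf → Fin r → Fin s → Fin sf → Fin m → ℝ)
    (hq : IsDist q) (hq' : IsDist q')
    (hIA : ∀ χ l, (∀ x, 0 ≤ IA x χ l) ∧ ∑ x, IA x χ l = 1)
    (hIB : ∀ ψ l, (∀ y, 0 ≤ IB y ψ l) ∧ ∑ y, IB y ψ l = 1)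
    (hOA : ∀ a x χ u, (∀ α, 0 ≤ OA α a x χ u) ∧ ∑ α, OA α a x χ u = 1)
    (hOB : ∀ b y ψ u, (∀ β, 0 ≤ OB β b y ψ u) ∧ ∑ β, OB β b y ψ u = 1)
    (hI : ∀ x y χ ψ, W.I x y χ ψ = ∑ l, q l * IA x χ l * IB y ψ l)
    (hO : ∀ α β a b x y χ ψ,
      W.O α β a b x y χ ψ = ∑ u, q' u * OA α a x χ u * OB β b y ψ u)
    (Qc : Fin n → (Fin r → Fin r → Fin s → Fin s → ℝ))
    (hQc : ∀ l, IsBehavior (Qc l))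
    (χ ψ : Fin sf) :
    relEnt (outDist (W.apply P) χ ψ)
        (outDist (fun α β χ ψ =>
          ∑ z : ((Fin n × Fin m) × (Fin s × Fin s)) × (Fin r × Fin r),
            ((q z.1.1.1 * q' z.1.1.2) *
                (IA z.1.2.1 χ z.1.1.1 * IB z.1.2.2 ψ z.1.1.1) *
              Qc z.1.1.1 z.2.1 z.2.2 z.1.2.1 z.1.2.2) *
            (OA α z.2.1 z.1.2.1 χ z.1.1.2 * OB β z.2.2 z.1.2.2 ψ z.1.1.2)) χ ψ) ≤
      ∑ l, ∑ u, ∑ x, ∑ y,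
        ENNReal.ofReal ((q l * q' u) * (IA x χ l * IB y ψ l)) *
          relEnt (outDist P x y) (outDist (Qc l) x y) := by
  classical
  set cc : ((Fin n × Fin m) × (Fin s × Fin s)) → ℝ := fun i => (q i.1.1 * q' i.1.2) * (IA i.2.1 χ i.1.1 * IB i.2.2 ψ i.1.1)
    with hccdef
  set pp : ((Fin n × Fin m) × (Fin s × Fin s)) → Fin r × Fin r → ℝ := fun i ab => P ab.1 ab.2 i.2.1 i.2.2 with hppdef
  set qq : ((Fin n × Fin m) × (Fin s × Fin s)) → Fin r × Fin r → ℝ := fun i ab => Qc i.1.1 ab.1 ab.2 i.2.1 i.2.2 with hqqdef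
  set T : (((Fin n × Fin m) × (Fin s × Fin s)) × (Fin r × Fin r)) → (Fin rf × Fin rf) → ℝ :=
    fun z w => OA w.1 z.2.1 z.1.2.1 χ z.1.1.2 * OB w.2 z.2.2 z.1.2.2 ψ z.1.1.2 with hTdef
  have hT0 : ∀ z w, 0 ≤ T z w := fun z w =>
    mul_nonneg ((hOA _ _ _ _).1 _) ((hOB _ _ _ _).1 _)
  have hT1 : ∀ z, ∑ w, T z w = 1 := by
    intro z
    rw [Fintype.sum_prod_type]
    simp only [hTdef]
    rw [← Finset.sum_mul_sum, (hOA _ _ _ _).2, (hOB _ _ _ _).2, one_mul]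
  have hcc0 : ∀ i, 0 ≤ cc i := fun i =>
    mul_nonneg (mul_nonneg (hq.1 _) (hq'.1 _))
      (mul_nonneg ((hIA _ _).1 _) ((hIB _ _).1 _))
  have step1 : outDist (W.apply P) χ ψ
      = fun w => ∑ z : ((Fin n × Fin m) × (Fin s × Fin s)) × (Fin r × Fin r), (cc z.1 * pp z.1 z.2) * T z w := by
    funext w
    show W.apply P w.1 w.2 χ ψ = _
    rw [GlobalWiring.apply]
    have hR : (∑ z : ((Fin n × Fin m) × (Fin s × Fin s)) × (Fin r × Fin r), (cc z.1 * pp z.1 z.2) * T z w)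
        = ∑ l, ∑ u, ∑ x, ∑ y, ∑ a, ∑ b,
            ((q l * q' u) * (IA x χ l * IB y ψ l) * P a b x y) *
              (OA w.1 a x χ u * OB w.2 b y ψ u) := by
      simp [Fintype.sum_prod_type, hccdef, hppdef, hTdef]
    rw [hR, sum_reorder6]
    refine Finset.sum_congr rfl fun a _ => Finset.sum_congr rfl fun b _ =>
      Finset.sum_congr rfl fun x _ => Finset.sum_congr rfl fun y _ => ?_
    rw [hO, hI, Finset.sum_mul, Finset.sum_mul]
    refine Finset.sum_congr rfl fun u _ => ?_
    rw [Finset.mul_sum]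
    refine Finset.sum_congr rfl fun l _ => ?_
    ring
  have step2 : outDist (fun α β χ ψ =>
      ∑ z : ((Fin n × Fin m) × (Fin s × Fin s)) × (Fin r × Fin r),
        ((q z.1.1.1 * q' z.1.1.2) *
            (IA z.1.2.1 χ z.1.1.1 * IB z.1.2.2 ψ z.1.1.1) *
          Qc z.1.1.1 z.2.1 z.2.2 z.1.2.1 z.1.2.2) *
        (OA α z.2.1 z.1.2.1 χ z.1.1.2 * OB β z.2.2 z.1.2.2 ψ z.1.1.2)) χ ψ
      = fun w => ∑ z : ((Fin n × Fin m) × (Fin s × Fin s)) × (Fin r × Fin r), (cc z.1 * qq z.1 z.2) * T z w := rfl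
  rw [step1, step2]
  refine le_trans (relEnt_map_le T hT0 hT1 _ _
    (fun z => mul_nonneg (hcc0 _) (hP.1 _ _ _ _))
    (fun z => mul_nonneg (hcc0 _) ((hQc _).1 _ _ _ _))) ?_
  refine le_trans (relEnt_joint_le cc hcc0 pp qq) ?_
  rw [Fintype.sum_prod_type, Fintype.sum_prod_type]
  refine le_of_eq (Finset.sum_congr rfl fun l _ => Finset.sum_congr rfl fun u _ => ?_)
  rw [Fintype.sum_prod_type]
  rfl


theorem sum_comm3 {M : Type*} [AddCommMonoid M] {A B C : Type*}
    [Fintype A] [Fintype B] [Fintype C] (f : A → B → C → M) :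
    ∑ a : A, ∑ b : B, ∑ c : C, f a b c = ∑ c : C, ∑ a : A, ∑ b : B, f a b c := by
  rw [show (∑ a : A, ∑ b : B, ∑ c : C, f a b c)
      = ∑ a : A, ∑ c : C, ∑ b : B, f a b c from
    Finset.sum_congr rfl fun a _ => Finset.sum_comm, Finset.sum_comm]

theorem qmix_behavior {r s rf sf n m : ℕ}
    (q : Fin n → ℝ) (q' : Fin m → ℝ)
    (IA : Fin s → Fin sf → Fin n → ℝ) (IB : Fin s → Fin sf → Fin n → ℝ)
    (OA : Fin rf → Fin r → Fin s → Fin sf → Fin m → ℝ)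
    (OB : Fin rf → Fin r → Fin s → Fin sf → Fin m → ℝ)
    (hq : IsDist q) (hq' : IsDist q')
    (hIA : ∀ χ l, (∀ x, 0 ≤ IA x χ l) ∧ ∑ x, IA x χ l = 1)
    (hIB : ∀ ψ l, (∀ y, 0 ≤ IB y ψ l) ∧ ∑ y, IB y ψ l = 1)
    (hOA : ∀ a x χ u, (∀ α, 0 ≤ OA α a x χ u) ∧ ∑ α, OA α a x χ u = 1)
    (hOB : ∀ b y ψ u, (∀ β, 0 ≤ OB β b y ψ u) ∧ ∑ β, OB β b y ψ u = 1)
    (Qc : Fin n → (Fin r → Fin r → Fin s → Fin s → ℝ))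
    (hQc : ∀ l, IsBehavior (Qc l)) :
    IsBehavior (fun α β χ ψ =>
      ∑ z : ((Fin n × Fin m) × (Fin s × Fin s)) × (Fin r × Fin r),
        ((q z.1.1.1 * q' z.1.1.2) *
            (IA z.1.2.1 χ z.1.1.1 * IB z.1.2.2 ψ z.1.1.1) *
          Qc z.1.1.1 z.2.1 z.2.2 z.1.2.1 z.1.2.2) *
        (OA α z.2.1 z.1.2.1 χ z.1.1.2 * OB β z.2.2 z.1.2.2 ψ z.1.1.2)) := by
  constructor
  · intro α β χ ψ
    refine Finset.sum_nonneg fun z _ => mul_nonneg (mul_nonneg (mul_nonneg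
      (mul_nonneg (hq.1 _) (hq'.1 _))
      (mul_nonneg ((hIA _ _).1 _) ((hIB _ _).1 _))) ((hQc _).1 _ _ _ _))
      (mul_nonneg ((hOA _ _ _ _).1 _) ((hOB _ _ _ _).1 _))
  · intro χ ψ
    rw [sum_comm3]
    have hz : ∀ z : ((Fin n × Fin m) × (Fin s × Fin s)) × (Fin r × Fin r),
        (∑ α, ∑ β,
          ((q z.1.1.1 * q' z.1.1.2) *
              (IA z.1.2.1 χ z.1.1.1 * IB z.1.2.2 ψ z.1.1.1) *
            Qc z.1.1.1 z.2.1 z.2.2 z.1.2.1 z.1.2.2) *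
          (OA α z.2.1 z.1.2.1 χ z.1.1.2 * OB β z.2.2 z.1.2.2 ψ z.1.1.2))
        = (q z.1.1.1 * q' z.1.1.2) *
              (IA z.1.2.1 χ z.1.1.1 * IB z.1.2.2 ψ z.1.1.1) *
            Qc z.1.1.1 z.2.1 z.2.2 z.1.2.1 z.1.2.2 := by
      intro z
      simp only [← Finset.mul_sum]
      rw [← Finset.sum_mul, (hOA _ _ _ _).2, (hOB _ _ _ _).2, one_mul, mul_one]
    rw [Finset.sum_congr rfl fun z _ => hz z]
    -- now the total mass of the joint is 1
    simp only [Fintype.sum_prod_type]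
    have hab : ∀ (l : Fin n) (u : Fin m) (x y : Fin s),
        (∑ a, ∑ b, (q l * q' u) * (IA x χ l * IB y ψ l) * Qc l a b x y)
          = (q l * q' u) * (IA x χ l * IB y ψ l) := by
      intro l u x y
      simp only [← Finset.mul_sum]
      rw [(hQc l).2 x y, mul_one]
    rw [Finset.sum_congr rfl fun l _ => Finset.sum_congr rfl fun u _ =>
      Finset.sum_congr rfl fun x _ => Finset.sum_congr rfl fun y _ => hab l u x y]
    have hxy : ∀ (l : Fin n) (u : Fin m),
        (∑ x, ∑ y, (q l * q' u) * (IA x χ l * IB y ψ l)) = q l * q' u := by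
      intro l u
      simp only [← Finset.mul_sum]
      rw [← Finset.sum_mul, (hIA χ l).2, (hIB ψ l).2, one_mul, mul_one]
    rw [Finset.sum_congr rfl fun l _ => Finset.sum_congr rfl fun u _ => hxy l u]
    rw [← Finset.sum_mul_sum, hq.2, hq'.2, one_mul]


theorem sum_reorder6'' {M : Type*} [AddCommMonoid M]
    {A B C D E G : Type*} [Fintype A] [Fintype B] [Fintype C] [Fintype D]
    [Fintype E] [Fintype G]
    (f : A → B → C → D → E → G → M) :
    ∑ u : A, ∑ x : B, ∑ y : C, ∑ a : D, ∑ b : E, ∑ k : G, f u x y a b k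
      = ∑ k : G, ∑ u : A, ∑ x : B, ∑ a : D, ∑ y : C, ∑ b : E, f u x y a b k := by
  have h1 : ∑ u : A, ∑ x : B, ∑ y : C, ∑ a : D, ∑ b : E, ∑ k : G, f u x y a b k
      = ∑ z : A × B × C × D × E × G,
          f z.1 z.2.1 z.2.2.1 z.2.2.2.1 z.2.2.2.2.1 z.2.2.2.2.2 := by
    simp [Fintype.sum_prod_type]
  have h2 : ∑ k : G, ∑ u : A, ∑ x : B, ∑ a : D, ∑ y : C, ∑ b : E, f u x y a b k
      = ∑ z : G × A × B × D × C × E,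
          f z.2.1 z.2.2.1 z.2.2.2.2.1 z.2.2.2.1 z.2.2.2.2.2 z.1 := by
    simp [Fintype.sum_prod_type]
  rw [h1, h2]
  exact Fintype.sum_equiv
    ⟨fun z => (z.2.2.2.2.2, z.1, z.2.1, z.2.2.2.1, z.2.2.1, z.2.2.2.2.1),
     fun z => (z.2.1, z.2.2.1, z.2.2.2.2.1, z.2.2.2.1, z.2.2.2.2.2, z.1),
     by rintro ⟨a, b, c, d, e, g⟩; rfl, by rintro ⟨a, b, c, d, e, g⟩; rfl⟩ _ _
    (by rintro ⟨a, b, c, d, e, g⟩; rfl)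

theorem qmix_local {r s rf sf n m : ℕ}
    (q : Fin n → ℝ) (q' : Fin m → ℝ)
    (IA : Fin s → Fin sf → Fin n → ℝ) (IB : Fin s → Fin sf → Fin n → ℝ)
    (OA : Fin rf → Fin r → Fin s → Fin sf → Fin m → ℝ)
    (OB : Fin rf → Fin r → Fin s → Fin sf → Fin m → ℝ)
    (hq : IsDist q) (hq' : IsDist q')
    (hIA : ∀ χ l, (∀ x, 0 ≤ IA x χ l) ∧ ∑ x, IA x χ l = 1)
    (hIB : ∀ ψ l, (∀ y, 0 ≤ IB y ψ l) ∧ ∑ y, IB y ψ l = 1)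
    (hOA : ∀ a x χ u, (∀ α, 0 ≤ OA α a x χ u) ∧ ∑ α, OA α a x χ u = 1)
    (hOB : ∀ b y ψ u, (∀ β, 0 ≤ OB β b y ψ u) ∧ ∑ β, OB β b y ψ u = 1)
    (Qc : Fin n → (Fin r → Fin r → Fin s → Fin s → ℝ))
    (hQcL : ∀ l, IsLocal (Qc l)) :
    IsLocal (fun α β χ ψ =>
      ∑ z : ((Fin n × Fin m) × (Fin s × Fin s)) × (Fin r × Fin r),
        ((q z.1.1.1 * q' z.1.1.2) *
            (IA z.1.2.1 χ z.1.1.1 * IB z.1.2.2 ψ z.1.1.1) *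
          Qc z.1.1.1 z.2.1 z.2.2 z.1.2.1 z.1.2.2) *
        (OA α z.2.1 z.1.2.1 χ z.1.1.2 * OB β z.2.2 z.1.2.2 ψ z.1.1.2)) := by
  classical
  choose nl t A B hw using hQcL
  refine isLocal_of_fintype (Λ := (Σ l : Fin n, Fin (nl l)) × Fin m)
    (fun lam => q lam.1.1 * t lam.1.1 lam.1.2 * q' lam.2)
    (fun α χ lam => ∑ x, IA x χ lam.1.1 *
      ∑ a, OA α a x χ lam.2 * A lam.1.1 a x lam.1.2)
    (fun β ψ lam => ∑ y, IB y ψ lam.1.1 *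
      ∑ b, OB β b y ψ lam.2 * B lam.1.1 b y lam.1.2)
    ?_ ?_ ?_ ?_ ?_
  · intro lam
    exact mul_nonneg (mul_nonneg (hq.1 _) ((hw lam.1.1).1.1 _)) (hq'.1 _)
  · rw [Fintype.sum_prod_type, ← Finset.univ_sigma_univ, Finset.sum_sigma]
    have h1 : ∀ (l : Fin n) (k : Fin (nl l)),
        (∑ u, q l * t l k * q' u) = q l * t l k := by
      intro l k
      rw [← Finset.mul_sum, hq'.2, mul_one]
    rw [Finset.sum_congr rfl fun l _ => Finset.sum_congr rfl fun k _ => h1 l k]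
    have h2 : ∀ l : Fin n, (∑ k, q l * t l k) = q l := by
      intro l
      rw [← Finset.mul_sum, (hw l).1.2, mul_one]
    rw [Finset.sum_congr rfl fun l _ => h2 l, hq.2]
  · -- PA' is a conditional distribution
    intro χ lam
    constructor
    · intro α
      refine Finset.sum_nonneg fun x _ => mul_nonneg ((hIA χ _).1 x)
        (Finset.sum_nonneg fun a _ => mul_nonneg ((hOA a x χ _).1 α)
          (((hw lam.1.1).2.1 x lam.1.2).1 a))
    · rw [Finset.sum_comm]
      have h3 : ∀ x : Fin s,
          (∑ α, IA x χ lam.1.1 * ∑ a, OA α a x χ lam.2 * A lam.1.1 a x lam.1.2)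
            = IA x χ lam.1.1 := by
        intro x
        rw [← Finset.mul_sum, Finset.sum_comm]
        have h4 : ∀ a : Fin r,
            (∑ α, OA α a x χ lam.2 * A lam.1.1 a x lam.1.2)
              = A lam.1.1 a x lam.1.2 := by
          intro a
          rw [← Finset.sum_mul, (hOA a x χ lam.2).2, one_mul]
        rw [Finset.sum_congr rfl fun a _ => h4 a,
          ((hw lam.1.1).2.1 x lam.1.2).2, mul_one]
      rw [Finset.sum_congr rfl fun x _ => h3 x, (hIA χ lam.1.1).2]
  · -- PB' is a conditional distribution
    intro ψ lam
    constructor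
    · intro β
      refine Finset.sum_nonneg fun y _ => mul_nonneg ((hIB ψ _).1 y)
        (Finset.sum_nonneg fun b _ => mul_nonneg ((hOB b y ψ _).1 β)
          (((hw lam.1.1).2.2.1 y lam.1.2).1 b))
    · rw [Finset.sum_comm]
      have h3 : ∀ y : Fin s,
          (∑ β, IB y ψ lam.1.1 * ∑ b, OB β b y ψ lam.2 * B lam.1.1 b y lam.1.2)
            = IB y ψ lam.1.1 := by
        intro y
        rw [← Finset.mul_sum, Finset.sum_comm]
        have h4 : ∀ b : Fin r,
            (∑ β, OB β b y ψ lam.2 * B lam.1.1 b y lam.1.2)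
              = B lam.1.1 b y lam.1.2 := by
          intro b
          rw [← Finset.sum_mul, (hOB b y ψ lam.2).2, one_mul]
        rw [Finset.sum_congr rfl fun b _ => h4 b,
          ((hw lam.1.1).2.2.1 y lam.1.2).2, mul_one]
      rw [Finset.sum_congr rfl fun y _ => h3 y, (hIB ψ lam.1.1).2]
  · -- representation
    intro α β χ ψ
    -- expand the left side into a flat 7-fold sum
    have hL : (∑ z : ((Fin n × Fin m) × (Fin s × Fin s)) × (Fin r × Fin r),
        ((q z.1.1.1 * q' z.1.1.2) *
            (IA z.1.2.1 χ z.1.1.1 * IB z.1.2.2 ψ z.1.1.1) *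
          Qc z.1.1.1 z.2.1 z.2.2 z.1.2.1 z.1.2.2) *
        (OA α z.2.1 z.1.2.1 χ z.1.1.2 * OB β z.2.2 z.1.2.2 ψ z.1.1.2))
        = ∑ l, ∑ u, ∑ x, ∑ y, ∑ a, ∑ b, ∑ k,
            (q l * t l k * q' u) *
              (IA x χ l * (OA α a x χ u * A l a x k)) *
              (IB y ψ l * (OB β b y ψ u * B l b y k)) := by
      simp only [Fintype.sum_prod_type]
      refine Finset.sum_congr rfl fun l _ => Finset.sum_congr rfl fun u _ =>
        Finset.sum_congr rfl fun x _ => Finset.sum_congr rfl fun y _ =>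
        Finset.sum_congr rfl fun a _ => Finset.sum_congr rfl fun b _ => ?_
      rw [(hw l).2.2.2 a b x y, Finset.mul_sum, Finset.sum_mul]
      refine Finset.sum_congr rfl fun k _ => ?_
      ring
    rw [hL, Fintype.sum_prod_type, ← Finset.univ_sigma_univ, Finset.sum_sigma]
    refine Finset.sum_congr rfl fun l _ => ?_
    rw [sum_reorder6'']
    refine Finset.sum_congr rfl fun k _ => Finset.sum_congr rfl fun u _ => ?_
    beta_reduce
    have hPA2 : (∑ x, IA x χ l * ∑ a, OA α a x χ u * A l a x k)
        = ∑ p : Fin s × Fin r, IA p.1 χ l * (OA α p.2 p.1 χ u * A l p.2 p.1 k) := by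
      rw [Fintype.sum_prod_type]
      exact Finset.sum_congr rfl fun x _ => Finset.mul_sum _ _ _
    have hPB2 : (∑ y, IB y ψ l * ∑ b, OB β b y ψ u * B l b y k)
        = ∑ e : Fin s × Fin r, IB e.1 ψ l * (OB β e.2 e.1 ψ u * B l e.2 e.1 k) := by
      rw [Fintype.sum_prod_type]
      exact Finset.sum_congr rfl fun y _ => Finset.mul_sum _ _ _
    conv_rhs => rw [hPA2, hPB2, mul_assoc, Finset.sum_mul_sum, Finset.mul_sum]
    rw [Fintype.sum_prod_type]
    refine Finset.sum_congr rfl fun x _ => ?_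
    refine Finset.sum_congr rfl fun a _ => ?_
    conv_rhs => rw [Finset.mul_sum]
    rw [Fintype.sum_prod_type]
    refine Finset.sum_congr rfl fun y _ => ?_
    refine Finset.sum_congr rfl fun b _ => ?_
    ring


theorem rearrange_lemma {s sf n m : ℕ}
    (DA DB : Fin sf → ℝ) (hDA : ∀ χ, 0 ≤ DA χ) (hDB : ∀ ψ, 0 ≤ DB ψ)
    (q : Fin n → ℝ) (q' : Fin m → ℝ) (hq0 : ∀ l, 0 ≤ q l)
    (hq'0 : ∀ u, 0 ≤ q' u) (hq'2 : ∑ u, q' u = 1)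
    (IA IB : Fin s → Fin sf → Fin n → ℝ)
    (hIA0 : ∀ x χ l, 0 ≤ IA x χ l) (hIB0 : ∀ y ψ l, 0 ≤ IB y ψ l)
    (R : Fin n → Fin s → Fin s → ℝ≥0∞) :
    (∑ χ, ∑ ψ, ENNReal.ofReal (DA χ * DB ψ) *
      ∑ l, ∑ u, ∑ x, ∑ y,
        ENNReal.ofReal ((q l * q' u) * (IA x χ l * IB y ψ l)) * R l x y)
    = ∑ l, ENNReal.ofReal (q l) *
        ∑ x, ∑ y, ENNReal.ofReal
          ((∑ χ, DA χ * IA x χ l) * (∑ ψ, DB ψ * IB y ψ l)) * R l x y := by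
  conv_lhs => simp only [Finset.mul_sum]
  rw [sum_reorder6']
  have hRHS : ∀ l : Fin n, (ENNReal.ofReal (q l) *
      ∑ x, ∑ y, ENNReal.ofReal
        ((∑ χ, DA χ * IA x χ l) * (∑ ψ, DB ψ * IB y ψ l)) * R l x y)
      = ∑ x, ∑ y, ENNReal.ofReal (q l) * (ENNReal.ofReal
          ((∑ χ, DA χ * IA x χ l) * (∑ ψ, DB ψ * IB y ψ l)) * R l x y) := by
    intro l
    rw [Finset.mul_sum]
    exact Finset.sum_congr rfl fun x _ => Finset.mul_sum _ _ _
  rw [Finset.sum_congr rfl fun l _ => hRHS l]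
  refine Finset.sum_congr rfl fun l _ => Finset.sum_congr rfl fun x _ =>
    Finset.sum_congr rfl fun y _ => ?_
  -- collapse the (χ, ψ, u) sums into a single `ofReal` coefficient
  have hterm : ∀ (χ ψ : Fin sf) (u : Fin m),
      ENNReal.ofReal (DA χ * DB ψ) *
        (ENNReal.ofReal ((q l * q' u) * (IA x χ l * IB y ψ l)) * R l x y)
      = ENNReal.ofReal ((DA χ * DB ψ) * ((q l * q' u) * (IA x χ l * IB y ψ l)))
          * R l x y := by
    intro χ ψ u
    rw [ENNReal.ofReal_mul (mul_nonneg (hDA χ) (hDB ψ))]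
    exact (mul_assoc _ _ _).symm
  rw [Finset.sum_congr rfl fun χ _ => Finset.sum_congr rfl fun ψ _ =>
    Finset.sum_congr rfl fun u _ => hterm χ ψ u]
  simp only [← Finset.sum_mul]
  have hreal : ∑ χ, ∑ ψ, ∑ u,
      (DA χ * DB ψ) * ((q l * q' u) * (IA x χ l * IB y ψ l))
      = q l * ((∑ χ, DA χ * IA x χ l) * (∑ ψ, DB ψ * IB y ψ l)) := by
    have h1 : ∀ (χ ψ : Fin sf), (∑ u,
        (DA χ * DB ψ) * ((q l * q' u) * (IA x χ l * IB y ψ l)))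
        = q l * ((DA χ * IA x χ l) * (DB ψ * IB y ψ l)) := by
      intro χ ψ
      have e : ∀ u, (DA χ * DB ψ) * ((q l * q' u) * (IA x χ l * IB y ψ l))
          = q' u * (q l * ((DA χ * IA x χ l) * (DB ψ * IB y ψ l))) := fun u => by
        ring
      rw [Finset.sum_congr rfl fun u _ => e u, ← Finset.sum_mul, hq'2, one_mul]
    rw [Finset.sum_congr rfl fun χ _ => Finset.sum_congr rfl fun ψ _ => h1 χ ψ]
    simp only [← Finset.mul_sum, ← Finset.sum_mul]
  have hcomb : ∑ χ, ∑ ψ, ∑ u, ENNReal.ofReal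
      ((DA χ * DB ψ) * ((q l * q' u) * (IA x χ l * IB y ψ l)))
      = ENNReal.ofReal (q l * ((∑ χ, DA χ * IA x χ l) * (∑ ψ, DB ψ * IB y ψ l))) := by
    rw [← hreal]
    rw [ENNReal.ofReal_sum_of_nonneg]
    · refine Finset.sum_congr rfl fun χ _ => ?_
      rw [ENNReal.ofReal_sum_of_nonneg]
      · refine Finset.sum_congr rfl fun ψ _ => ?_
        rw [ENNReal.ofReal_sum_of_nonneg]
        intro u _
        exact mul_nonneg (mul_nonneg (hDA χ) (hDB ψ)) (mul_nonneg
          (mul_nonneg (hq0 l) (hq'0 u)) (mul_nonneg (hIA0 x χ l) (hIB0 y ψ l)))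
      · intro ψ _
        exact Finset.sum_nonneg fun u _ => mul_nonneg (mul_nonneg (hDA χ) (hDB ψ))
          (mul_nonneg (mul_nonneg (hq0 l) (hq'0 u))
            (mul_nonneg (hIA0 x χ l) (hIB0 y ψ l)))
    · intro χ _
      exact Finset.sum_nonneg fun ψ _ => Finset.sum_nonneg fun u _ =>
        mul_nonneg (mul_nonneg (hDA χ) (hDB ψ)) (mul_nonneg
          (mul_nonneg (hq0 l) (hq'0 u)) (mul_nonneg (hIA0 x χ l) (hIB0 y ψ l)))
  rw [hcomb, ENNReal.ofReal_mul (hq0 l), mul_assoc]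


end Aux

/-- the uncorrelated-input statistical strength `S_uc` is a Bell
nonlocality monotone. -/
theorem Suc_Bell_monotone {r s rf sf : ℕ} (hrf : 0 < rf)
    (P : Fin r → Fin r → Fin s → Fin s → ℝ)
    (hP : IsBehavior P) (hPns : NoSignaling P)
    (W : GlobalWiring r s rf sf) (hW : W.IsLOSR) :
    Suc (W.apply P) ≤ Suc P ∧
      ∀ Q : Fin r → Fin r → Fin s → Fin s → ℝ,
        IsBehavior Q → IsLocal Q → Suc Q = 0 := by
  obtain ⟨n, m, q, q', IA, IB, OA, OB, hq, hq', hIA, hIB, hOA, hOB, hI, hO⟩ := hW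
  constructor
  · -- monotonicity
    rw [Suc]
    refine iSup_le fun DA => iSup_le fun DB => iSup_le fun hD => ?_
    apply ENNReal.le_of_forall_pos_le_add
    intro ε hε htop
    -- induced product input distributions for each value of the shared input randomness
    set DA' : Fin n → Fin s → ℝ := fun l x => ∑ χ, DA χ * IA x χ l with hDA'def
    set DB' : Fin n → Fin s → ℝ := fun l y => ∑ ψ, DB ψ * IB y ψ l with hDB'def
    have hDA' : ∀ l, IsDist (DA' l) := by
      intro l
      constructor
      · intro x
        exact Finset.sum_nonneg fun χ _ => mul_nonneg (hD.1.1 χ) ((hIA χ l).1 x)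
      · rw [Finset.sum_comm]
        rw [show (1:ℝ) = ∑ χ, DA χ from hD.1.2.symm]
        refine Finset.sum_congr rfl fun χ _ => ?_
        rw [← Finset.mul_sum, (hIA χ l).2, mul_one]
    have hDB' : ∀ l, IsDist (DB' l) := by
      intro l
      constructor
      · intro y
        exact Finset.sum_nonneg fun ψ _ => mul_nonneg (hD.2.1 ψ) ((hIB ψ l).1 y)
      · rw [Finset.sum_comm]
        rw [show (1:ℝ) = ∑ ψ, DB ψ from hD.2.2.symm]
        refine Finset.sum_congr rfl fun ψ _ => ?_
        rw [← Finset.mul_sum, (hIB ψ l).2, mul_one]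
    -- choose near-optimal local models for each value of the shared randomness
    have hchoice : ∀ l : Fin n, ∃ Qc : Fin r → Fin r → Fin s → Fin s → ℝ,
        (IsBehavior Qc ∧ IsLocal Qc) ∧
        ∑ x, ∑ y, ENNReal.ofReal (DA' l x * DB' l y) *
          relEnt (outDist P x y) (outDist Qc x y) ≤ Suc P + ε := by
      intro l
      have hb : (⨅ (Q : Fin r → Fin r → Fin s → Fin s → ℝ)
          (_ : IsBehavior Q ∧ IsLocal Q),
          ∑ x, ∑ y, ENNReal.ofReal (DA' l x * DB' l y) *
            relEnt (outDist P x y) (outDist Q x y)) ≤ Suc P := by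
        rw [Suc]
        exact le_iSup_of_le (DA' l) (le_iSup_of_le (DB' l)
          (le_iSup_of_le ⟨hDA' l, hDB' l⟩ le_rfl))
      have hlt : (⨅ (Q : Fin r → Fin r → Fin s → Fin s → ℝ)
          (_ : IsBehavior Q ∧ IsLocal Q),
          ∑ x, ∑ y, ENNReal.ofReal (DA' l x * DB' l y) *
            relEnt (outDist P x y) (outDist Q x y)) < Suc P + ε :=
        lt_of_le_of_lt hb (ENNReal.lt_add_right htop.ne
          (by exact_mod_cast hε.ne'))
      obtain ⟨Qc, hlt2⟩ := iInf_lt_iff.mp hlt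
      obtain ⟨hQc, hlt3⟩ := iInf_lt_iff.mp hlt2
      exact ⟨Qc, hQc, le_of_lt hlt3⟩
    choose Qc hQcP hQcle using hchoice
    -- the mixed local behavior in the final scenario
    set Qmix : Fin rf → Fin rf → Fin sf → Fin sf → ℝ := fun α β χ ψ =>
      ∑ z : ((Fin n × Fin m) × (Fin s × Fin s)) × (Fin r × Fin r),
        ((q z.1.1.1 * q' z.1.1.2) *
            (IA z.1.2.1 χ z.1.1.1 * IB z.1.2.2 ψ z.1.1.1) *
          Qc z.1.1.1 z.2.1 z.2.2 z.1.2.1 z.1.2.2) *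
        (OA α z.2.1 z.1.2.1 χ z.1.1.2 * OB β z.2.2 z.1.2.2 ψ z.1.1.2)
      with hQmixdef
    have hQmixB : IsBehavior Qmix :=
      qmix_behavior q q' IA IB OA OB hq hq' hIA hIB hOA hOB Qc
        (fun l => (hQcP l).1)
    have hQmixL : IsLocal Qmix :=
      qmix_local q q' IA IB OA OB hq hq' hIA hIB hOA hOB Qc
        (fun l => (hQcP l).2)
    have key : ∀ χ ψ : Fin sf,
        relEnt (outDist (W.apply P) χ ψ) (outDist Qmix χ ψ) ≤
          ∑ l, ∑ u, ∑ x, ∑ y,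
            ENNReal.ofReal ((q l * q' u) * (IA x χ l * IB y ψ l)) *
              relEnt (outDist P x y) (outDist (Qc l) x y) :=
      fun χ ψ => key_lemma P hP W q q' IA IB OA OB hq hq' hIA hIB hOA hOB hI hO
        Qc (fun l => (hQcP l).1) χ ψ
    have rearrange :
        (∑ χ, ∑ ψ, ENNReal.ofReal (DA χ * DB ψ) *
          ∑ l, ∑ u, ∑ x, ∑ y,
            ENNReal.ofReal ((q l * q' u) * (IA x χ l * IB y ψ l)) *
              relEnt (outDist P x y) (outDist (Qc l) x y))
        = ∑ l, ENNReal.ofReal (q l) *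
            ∑ x, ∑ y, ENNReal.ofReal (DA' l x * DB' l y) *
              relEnt (outDist P x y) (outDist (Qc l) x y) :=
      rearrange_lemma DA DB hD.1.1 hD.2.1 q q' hq.1 hq'.1 hq'.2 IA IB
        (fun x χ l => (hIA χ l).1 x) (fun y ψ l => (hIB ψ l).1 y)
        (fun l x y => relEnt (outDist P x y) (outDist (Qc l) x y))
    calc (⨅ (Q : Fin rf → Fin rf → Fin sf → Fin sf → ℝ)
          (_ : IsBehavior Q ∧ IsLocal Q),
          ∑ x, ∑ y, ENNReal.ofReal (DA x * DB y) *
            relEnt (outDist (W.apply P) x y) (outDist Q x y))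
        ≤ ∑ χ, ∑ ψ, ENNReal.ofReal (DA χ * DB ψ) *
            relEnt (outDist (W.apply P) χ ψ) (outDist Qmix χ ψ) :=
          iInf_le_of_le Qmix (iInf_le_of_le ⟨hQmixB, hQmixL⟩ le_rfl)
      _ ≤ ∑ χ, ∑ ψ, ENNReal.ofReal (DA χ * DB ψ) *
            ∑ l, ∑ u, ∑ x, ∑ y,
              ENNReal.ofReal ((q l * q' u) * (IA x χ l * IB y ψ l)) *
                relEnt (outDist P x y) (outDist (Qc l) x y) :=
          Finset.sum_le_sum fun χ _ => Finset.sum_le_sum fun ψ _ =>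
            mul_le_mul_right (key χ ψ) _
      _ = ∑ l, ENNReal.ofReal (q l) *
            ∑ x, ∑ y, ENNReal.ofReal (DA' l x * DB' l y) *
              relEnt (outDist P x y) (outDist (Qc l) x y) := rearrange
      _ ≤ ∑ l, ENNReal.ofReal (q l) * (Suc P + ε) :=
          Finset.sum_le_sum fun l _ => mul_le_mul_right (hQcle l) _
      _ = Suc P + ε := by
          rw [← Finset.sum_mul, ← ENNReal.ofReal_sum_of_nonneg
            (fun l _ => hq.1 l), hq.2, ENNReal.ofReal_one, one_mul]
  · -- locality implies vanishing
    intro Q hQb hQl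
    rw [Suc]
    refine le_antisymm (iSup_le fun DA => iSup_le fun DB => iSup_le fun hD => ?_)
      zero_le
    refine le_trans (iInf_le_of_le Q (iInf_le_of_le ⟨hQb, hQl⟩ le_rfl))
      (le_of_eq ?_)
    refine Finset.sum_eq_zero fun x _ => Finset.sum_eq_zero fun y _ => ?_
    rw [relEnt_self, mul_zero]
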